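/- arXiv:1905.11092 — 5 statements merged into one kernel-verified Lean document; each statement's English description precedes it below -/
import Mathlib

section
/- Let δ ∈ (0,1), let d, q, N be positive integers with d · 2^{−q} ≤ 1 − δ, let Φ : {0,1}^d → {0,1}, and suppose Φ(x) = 1 for some x ∈ {0,1}^d. Define Φ' : ({0,1}^d)^q × {0,1}^N → {0,1} by Φ'(u^{(1)},…,u^{(q)}, v) = Φ(⋀_{j=1}^q u^{(j)}) ∨ (⋀_{i=1}^N v_i), where ⋀_{j=1}^q u^{(j)} is the componentwise conjunction, and let x' be the all-ones input. Let S = {i ∈ [d] : x_i = 1} and S' = S × [q] (viewed as a subset of the U-coordinates). Then the set S' is δ-relevant for Φ' and x': the conditional probability that Φ'(U, v) = 1, given that u_i^{(j)} = 1 for all (i,j) ∈ S', is at least δ, where (U, v) is uniformly random on ({0,1}^d)^q × {0,1}^N. -/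
/-- Let `δ ∈ (0,1)`, `d, q, N` positive with `d·2^{−q} ≤ 1 − δ`, and let
`Φ` be satisfiable, say `Φ(x) = 1`.  Define
`Φ'(u⁽¹⁾,…,u⁽ᑫ⁾,v) = Φ(⋀ⱼ u⁽ʲ⁾) ∨ (⋀ᵢ vᵢ)` and let `x'` be the all-ones input.
With `S = {i : xᵢ = 1}` and `S' = S × [q]`, the set `S'` is `δ`-relevant for `Φ'` and
`x'`: the conditional probability (for uniformly random `(U, v)`) that `Φ'(U, v) = 1`,
given `uᵢ⁽ʲ⁾ = 1` for all `(i,j) ∈ S'`, is at least `δ`. -/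
theorem sat_gives_relevant_set (δ : ℝ) (hδ0 : 0 < δ) (hδ1 : δ < 1)
    (d q N : ℕ) (hd : 0 < d) (hq : 0 < q) (hN : 0 < N)
    (hgap : (d : ℝ) * ((2 : ℝ) ^ q)⁻¹ ≤ 1 - δ)
    (Φ : (Fin d → Bool) → Bool) (x : Fin d → Bool) (hx : Φ x = true) :
    let Φ' : (Fin d → Fin q → Bool) × (Fin N → Bool) → Bool := fun w =>
      Φ (fun i => decide (∀ j : Fin q, w.1 i j = true)) || decide (∀ i : Fin N, w.2 i = true)
    let S : Finset (Fin d) := Finset.univ.filter (fun i => x i = true)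
    let S' : Finset (Fin d × Fin q) := S ×ˢ Finset.univ
    δ ≤ ((Finset.univ.filter
          (fun w : (Fin d → Fin q → Bool) × (Fin N → Bool) =>
            Φ' w = true ∧ ∀ c ∈ S', w.1 c.1 c.2 = true)).card : ℝ) /
        ((Finset.univ.filter
          (fun w : (Fin d → Fin q → Bool) × (Fin N → Bool) =>
            ∀ c ∈ S', w.1 c.1 c.2 = true)).card : ℝ) := by
  intro Φ' S S'
  classical
  set t : Fin d → Finset (Fin q → Bool) :=
    fun i => if i ∈ S then {fun _ => true} else Finset.univ with ht
  set t' : Fin d → Finset (Fin q → Bool) :=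
    fun i => if i ∈ S then {fun _ => true}
      else Finset.univ.filter (fun g => ∃ j, g j = false) with ht'
  set m := (Finset.univ.filter (fun i : Fin d => i ∉ S)).card with hm
  -- denominator as product set
  have hden : (Finset.univ.filter
      (fun w : (Fin d → Fin q → Bool) × (Fin N → Bool) =>
        ∀ c ∈ S', w.1 c.1 c.2 = true))
      = (Fintype.piFinset t) ×ˢ (Finset.univ : Finset (Fin N → Bool)) := by
    ext w
    simp only [Finset.mem_filter, Finset.mem_univ, true_and, Finset.mem_product,
      Fintype.mem_piFinset, ht, and_true]
    constructor
    · intro h i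
      by_cases hi : i ∈ S
      · simp only [hi, if_true, Finset.mem_singleton]
        funext j
        exact h (i, j) (Finset.mem_product.2 ⟨hi, Finset.mem_univ _⟩)
      · simp [hi]
    · intro h c hc
      have hc1 : c.1 ∈ S := (Finset.mem_product.1 hc).1
      have := h c.1
      simp only [hc1, if_true, Finset.mem_singleton] at this
      exact congrFun this c.2
  -- numerator contains product set
  have hsub : (Fintype.piFinset t') ×ˢ (Finset.univ : Finset (Fin N → Bool))
      ⊆ (Finset.univ.filter
        (fun w : (Fin d → Fin q → Bool) × (Fin N → Bool) =>
          Φ' w = true ∧ ∀ c ∈ S', w.1 c.1 c.2 = true)) := by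
    intro w hw
    rw [Finset.mem_product] at hw
    have hw1 := Fintype.mem_piFinset.1 hw.1
    have hS : ∀ c ∈ S', w.1 c.1 c.2 = true := by
      intro c hc
      have hc1 : c.1 ∈ S := (Finset.mem_product.1 hc).1
      have := hw1 c.1
      simp only [ht', hc1, if_true, Finset.mem_singleton] at this
      exact congrFun this c.2
    refine Finset.mem_filter.2 ⟨Finset.mem_univ _, ?_, hS⟩
    have hconj : (fun i => decide (∀ j : Fin q, w.1 i j = true)) = x := by
      funext i
      by_cases hi : i ∈ S
      · have hxi : x i = true := (Finset.mem_filter.1 hi).2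
        have : ∀ j : Fin q, w.1 i j = true := fun j =>
          hS (i, j) (Finset.mem_product.2 ⟨hi, Finset.mem_univ _⟩)
        simp [this, hxi]
      · have hxi : x i = false := by
          have hne : ¬ (x i = true) := fun h => hi (Finset.mem_filter.2 ⟨Finset.mem_univ i, h⟩)
          simpa using hne
        have := hw1 i
        simp only [ht', hi, if_false, Finset.mem_filter, Finset.mem_univ, true_and] at this
        obtain ⟨j, hj⟩ := this
        have : ¬ (∀ j : Fin q, w.1 i j = true) := fun h => by simp [h j] at hj
        simp [this, hxi]
    simp [Φ', hconj, hx]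
  -- cards
  have hcard_den : ((Fintype.piFinset t) ×ˢ (Finset.univ : Finset (Fin N → Bool))).card
      = (2^q)^m * 2^N := by
    rw [Finset.card_product, Fintype.card_piFinset]
    congr 1
    · have h1 : ∀ i : Fin d, (t i).card = if i ∉ S then 2^q else 1 := by
        intro i; by_cases hi : i ∈ S <;> simp [ht, hi, Finset.card_univ]
      rw [Finset.prod_congr rfl (fun i _ => h1 i), ← Finset.prod_filter,
        Finset.prod_const, hm]
    · simp [Finset.card_univ]
  have hcard_num : ((Fintype.piFinset t') ×ˢ (Finset.univ : Finset (Fin N → Bool))).card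
      = (2^q - 1)^m * 2^N := by
    rw [Finset.card_product, Fintype.card_piFinset]
    have hbad : (Finset.univ.filter (fun g : Fin q → Bool => ∃ j, g j = false)).card
        = 2^q - 1 := by
      have hcompl : (Finset.univ.filter (fun g : Fin q → Bool => ∃ j, g j = false))
          = ({fun _ => true} : Finset (Fin q → Bool))ᶜ := by
        ext g
        simp only [Finset.mem_filter, Finset.mem_univ, true_and, Finset.mem_compl,
          Finset.mem_singleton]
        constructor
        · rintro ⟨j, hj⟩ rfl; simp at hj
        · intro h
          by_contra hc
          push_neg at hc
          apply h
          funext j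
          have := hc j
          simpa using this
      rw [hcompl, Finset.card_compl, Finset.card_singleton]
      simp
    congr 1
    · have h1 : ∀ i : Fin d, (t' i).card = if i ∉ S then 2^q - 1 else 1 := by
        intro i; by_cases hi : i ∈ S <;> simp [ht', hi, hbad]
      rw [Finset.prod_congr rfl (fun i _ => h1 i), ← Finset.prod_filter,
        Finset.prod_const, hm]
    · simp [Finset.card_univ]
  -- final arithmetic
  rw [hden]
  have hq2 : (0:ℝ) < (2:ℝ)^q := by positivity
  have hmle : (m:ℝ) ≤ (d:ℝ) := by
    have : m ≤ d := le_trans (Finset.card_le_card (Finset.filter_subset _ _)) (by simp)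
    exact_mod_cast this
  have hden_pos : (0:ℝ) < (((Fintype.piFinset t) ×ˢ (Finset.univ : Finset (Fin N → Bool))).card : ℝ) := by
    rw [hcard_den]; positivity
  rw [le_div_iff₀ hden_pos, hcard_den]
  have hnum_ge : (((2^q - 1)^m * 2^N : ℕ) : ℝ)
      ≤ ((Finset.univ.filter
          (fun w : (Fin d → Fin q → Bool) × (Fin N → Bool) =>
            Φ' w = true ∧ ∀ c ∈ S', w.1 c.1 c.2 = true)).card : ℝ) := by
    rw [← hcard_num]
    exact_mod_cast Finset.card_le_card hsub
  refine le_trans ?_ hnum_ge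
  have hcast : (((2^q - 1)^m * 2^N : ℕ) : ℝ) = ((2:ℝ)^q - 1)^m * 2^N := by
    have h1 : (1:ℕ) ≤ 2^q := Nat.one_le_two_pow
    push_cast [Nat.cast_sub h1]
    ring
  rw [hcast]
  push_cast
  have h1 : (1:ℝ) ≤ (2:ℝ)^q := one_le_pow₀ (by norm_num)
  have hinvle : ((2:ℝ)^q)⁻¹ ≤ 1 := by
    have key : ((2:ℝ)^q)⁻¹ * (2:ℝ)^q = 1 := inv_mul_cancel₀ (ne_of_gt hq2)
    have hpos : (0:ℝ) ≤ ((2:ℝ)^q)⁻¹ := by positivity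
    nlinarith
  have hδle : δ ≤ (1 - ((2:ℝ)^q)⁻¹)^m := by
    have hb : (-2:ℝ) ≤ -((2:ℝ)^q)⁻¹ := by linarith
    have hber := one_add_mul_le_pow hb m
    have h3 : 1 - (m:ℝ) * ((2:ℝ)^q)⁻¹ ≤ (1 - ((2:ℝ)^q)⁻¹)^m := by
      simpa [sub_eq_add_neg, mul_comm, mul_assoc] using hber
    have h2 : δ ≤ 1 - (m:ℝ) * ((2:ℝ)^q)⁻¹ := by
      have hinv : (0:ℝ) ≤ ((2:ℝ)^q)⁻¹ := by positivity
      nlinarith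
    linarith
  calc δ * (((2:ℝ)^q) ^ m * 2^N)
      ≤ (1 - ((2:ℝ)^q)⁻¹)^m * (((2:ℝ)^q) ^ m * 2^N) := by
        apply mul_le_mul_of_nonneg_right hδle; positivity
    _ = ((2:ℝ)^q - 1)^m * 2^N := by
        rw [← mul_assoc, ← mul_pow]
        congr 2
        field_simp
end

section
/- Let δ ∈ (0,1), let d, q, m', p be positive integers with 2^{−p} < δ, let N = m' + p, and let Φ : {0,1}^d → {0,1} be unsatisfiable (Φ(z) = 0 for all z ∈ {0,1}^d). Define Φ' : ({0,1}^d)^q × {0,1}^N → {0,1} by Φ'(u^{(1)},…,u^{(q)}, v) = Φ(⋀_{j=1}^q u^{(j)}) ∨ (⋀_{i=1}^N v_i), and let x' be the all-ones input. Then for every subset T of the dq + N coordinates with |T| ≤ m', the conditional probability that Φ'(y) = 1 given y_T = 1 (with y uniformly random) is at most 2^{−(m' + p − |T|)}, which is strictly less than δ; in particular no such T is δ-relevant for Φ' and x'. -/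
lemma card_filter_forall_true {α : Type*} [Fintype α] [DecidableEq α] (S : Finset α) :
    (Finset.univ.filter (fun f : α → Bool => ∀ a ∈ S, f a = true)).card
      = 2 ^ (Fintype.card α - S.card) := by
  rw [← Fintype.card_subtype]
  have e : {f : α → Bool // ∀ a ∈ S, f a = true} ≃ ((Sᶜ : Finset α) → Bool) :=
    { toFun := fun f a => f.1 a
      invFun := fun g => ⟨fun a => if h : a ∈ S then true else g ⟨a, by simpa using h⟩,
        fun a ha => by simp [ha]⟩
      left_inv := by
        intro f
        ext a
        by_cases h : a ∈ S
        · simp [h, f.2 a h]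
        · simp [h]
      right_inv := by
        intro g
        funext a
        have : (a : α) ∉ S := Finset.mem_compl.mp a.2
        simp [this] }
  rw [Fintype.card_congr e, Fintype.card_fun]
  simp [Finset.card_compl]

/-- Let `δ ∈ (0,1)`, `d, q, m', p` positive with `2^{−p} < δ`, `N = m' + p`,
and let `Φ` be unsatisfiable.  Define `Φ'(U, v) = Φ(⋀ⱼ u⁽ʲ⁾) ∨ (⋀ᵢ vᵢ)` on
`({0,1}^d)^q × {0,1}^N` and let `x'` be the all-ones input.  Then for every subset `T`
of the `dq + N` coordinates with `|T| ≤ m'`, the conditional probability that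
`Φ'(y) = 1` given `y_T = 1` (with `y` uniformly random) is at most
`2^{−(m' + p − |T|)} < δ`; in particular no such `T` is `δ`-relevant for `Φ'` and `x'`. -/
theorem unsat_no_relevant_set (δ : ℝ) (hδ0 : 0 < δ) (hδ1 : δ < 1)
    (d q m' p : ℕ) (hd : 0 < d) (hq : 0 < q) (hm' : 0 < m') (hp : 0 < p)
    (hpδ : ((2 : ℝ) ^ p)⁻¹ < δ)
    (N : ℕ) (hN : N = m' + p)
    (Φ : (Fin d → Bool) → Bool) (hΦ : ∀ z : Fin d → Bool, Φ z = false) :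
    let Φ' : (Fin d → Fin q → Bool) × (Fin N → Bool) → Bool := fun w =>
      Φ (fun i => decide (∀ j : Fin q, w.1 i j = true)) || decide (∀ i : Fin N, w.2 i = true)
    -- the value of the coordinate `c` of a configuration `w`
    let coord : (Fin d → Fin q → Bool) × (Fin N → Bool) → (Fin d × Fin q) ⊕ Fin N → Bool :=
      fun w => Sum.elim (fun c => w.1 c.1 c.2) w.2
    ∀ T : Finset ((Fin d × Fin q) ⊕ Fin N), T.card ≤ m' →
      ((Finset.univ.filter
          (fun w : (Fin d → Fin q → Bool) × (Fin N → Bool) =>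
            Φ' w = true ∧ ∀ c ∈ T, coord w c = true)).card : ℝ) /
        ((Finset.univ.filter
          (fun w : (Fin d → Fin q → Bool) × (Fin N → Bool) =>
            ∀ c ∈ T, coord w c = true)).card : ℝ)
      ≤ ((2 : ℝ) ^ (m' + p - T.card))⁻¹
      ∧ ((2 : ℝ) ^ (m' + p - T.card))⁻¹ < δ := by
  intro Φ' coord T hT
  -- the equivalence between configurations and functions on coordinates
  let e : ((Fin d → Fin q → Bool) × (Fin N → Bool)) ≃ (((Fin d × Fin q) ⊕ Fin N) → Bool) :=
    { toFun := coord
      invFun := fun f => (fun i j => f (Sum.inl (i, j)), fun i => f (Sum.inr i))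
      left_inv := fun w => rfl
      right_inv := by
        intro f
        funext c
        cases c <;> rfl }
  have hγcard : Fintype.card ((Fin d × Fin q) ⊕ Fin N) = d * q + N := by
    simp
  -- the "always true on S" set for the numerator
  have hSnumcard : ((Finset.univ.image (Sum.inr : Fin N → (Fin d × Fin q) ⊕ Fin N)) ∪ T).card
      = N + T.toLeft.card := by
    have h1 : ((Finset.univ.image (Sum.inr : Fin N → (Fin d × Fin q) ⊕ Fin N)) ∪ T).toLeft
        = T.toLeft := by
      ext a
      simp
    have h2 : ((Finset.univ.image (Sum.inr : Fin N → (Fin d × Fin q) ⊕ Fin N)) ∪ T).toRight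
        = Finset.univ := by
      ext a
      simp
    have h3 := Finset.card_toLeft_add_card_toRight
      (u := (Finset.univ.image (Sum.inr : Fin N → (Fin d × Fin q) ⊕ Fin N)) ∪ T)
    rw [h1, h2] at h3
    have h4 : (Finset.univ : Finset (Fin N)).card = N := by simp
    omega
  -- transfer card computations
  have key : ∀ S : Finset ((Fin d × Fin q) ⊕ Fin N),
      (Finset.univ.filter
        (fun w : (Fin d → Fin q → Bool) × (Fin N → Bool) => ∀ c ∈ S, coord w c = true)).card
        = 2 ^ (d * q + N - S.card) := by
    intro S
    rw [← hγcard, ← card_filter_forall_true S, ← Fintype.card_subtype, ← Fintype.card_subtype]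
    exact Fintype.card_congr (e.subtypeEquiv (fun w => Iff.rfl))
  -- numerator
  have hnum : (Finset.univ.filter
      (fun w : (Fin d → Fin q → Bool) × (Fin N → Bool) =>
        Φ' w = true ∧ ∀ c ∈ T, coord w c = true)).card
      = 2 ^ (d * q + N - (N + T.toLeft.card)) := by
    rw [← hSnumcard, ← key]
    congr 1
    apply Finset.filter_congr
    intro w _
    have hΦ'w : Φ' w = decide (∀ i : Fin N, w.2 i = true) := by
      simp only [Φ', hΦ, Bool.false_or]
    rw [hΦ'w]
    simp only [decide_eq_true_eq]
    constructor
    · rintro ⟨h1, h2⟩ c hc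
      rcases Finset.mem_union.mp hc with hc | hc
      · obtain ⟨i, _, rfl⟩ := Finset.mem_image.mp hc
        exact h1 i
      · exact h2 c hc
    · intro h
      refine ⟨fun i => h _ (Finset.mem_union_left _
        (Finset.mem_image_of_mem _ (Finset.mem_univ i))), fun c hc =>
        h c (Finset.mem_union_right _ hc)⟩
  have hden := key T
  have ht1 : T.toLeft.card ≤ d * q := by
    have := Finset.card_le_univ T.toLeft
    simpa using this
  have htlr := Finset.card_toLeft_add_card_toRight (u := T)
  have htN : T.card ≤ N := by omega
  rw [hnum, hden]
  constructor
  · rw [Nat.cast_pow, Nat.cast_pow, Nat.cast_ofNat, inv_eq_one_div,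
      div_le_div_iff₀ (by positivity) (by positivity), one_mul, ← pow_add]
    apply pow_le_pow_right₀ (by norm_num)
    omega
  · have h1 : (2 : ℝ) ^ p ≤ 2 ^ (m' + p - T.card) :=
      pow_le_pow_right₀ (by norm_num) (by omega)
    calc ((2 : ℝ) ^ (m' + p - T.card))⁻¹ ≤ ((2 : ℝ) ^ p)⁻¹ :=
          inv_anti₀ (by positivity) h1
    _ < δ := hpδ
end

section
/- Let δ ∈ (0,1), let d be a positive integer, and let q, p, m' be positive integers satisfying d · 2^{−q} ≤ 1 − δ, 2^{−p} < δ, and m' ≥ dq. Let Φ : {0,1}^d → {0,1}, let N = m' + p, define Φ' : ({0,1}^d)^q × {0,1}^N → {0,1} by Φ'(u^{(1)},…,u^{(q)}, v) = Φ(⋀_{j=1}^q u^{(j)}) ∨ (⋀_{i=1}^N v_i), and let x' be the all-ones input. Then Φ is satisfiable if and only if there exists a subset T of the dq + N coordinates with |T| ≤ dq that is δ-relevant for Φ' and x'. Moreover, if Φ is unsatisfiable then no subset T with |T| ≤ m' is δ-relevant for Φ' and x'. -/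
open Finset

lemma card_filter_forall_mem_eq {I : Type*} [Fintype I] [DecidableEq I] (S : Finset I) :
    (Finset.univ.filter (fun f : I → Bool => ∀ c ∈ S, f c = true)).card
      = 2 ^ (Fintype.card I - S.card) := by
  classical
  rw [← Fintype.card_subtype]
  rw [Fintype.card_congr (Equiv.subtypePiEquivPi (p := fun i (b : Bool) => i ∈ S → b = true))]
  rw [Fintype.card_pi]
  have h1 : ∀ i : I, Fintype.card {b : Bool // i ∈ S → b = true} = if i ∈ S then 1 else 2 := by
    intro i
    by_cases h : i ∈ S
    · simp only [h, if_true, true_implies]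
      exact Fintype.card_subtype_eq true
    · simp only [h, false_implies]
      rw [Fintype.card_congr (Equiv.subtypeUnivEquiv (fun _ => trivial))]; simp
  calc (∏ i : I, Fintype.card {b : Bool // i ∈ S → b = true})
      = ∏ i : I, (if i ∈ S then 1 else 2) := Finset.prod_congr rfl (fun i _ => h1 i)
    _ = 2 ^ (Fintype.card I - S.card) := by
        rw [Finset.prod_ite, Finset.prod_const, Finset.prod_const, one_pow, one_mul]
        congr 1
        have : univ.filter (fun i => ¬ i ∈ S) = Sᶜ := by ext i; simp
        rw [this, Finset.card_compl]

lemma card_coord_forced (d q N : ℕ) (T : Finset ((Fin d × Fin q) ⊕ Fin N)) :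
    (Finset.univ.filter (fun w : (Fin d → Fin q → Bool) × (Fin N → Bool) =>
        ∀ c ∈ T, Sum.elim (fun c : Fin d × Fin q => w.1 c.1 c.2) w.2 c = true)).card
      = 2 ^ (d * q + N - T.card) := by
  classical
  let e : ((Fin d → Fin q → Bool) × (Fin N → Bool)) ≃ (((Fin d × Fin q) ⊕ Fin N) → Bool) :=
    ((Equiv.curry (Fin d) (Fin q) Bool).prodCongr (Equiv.refl (Fin N → Bool))).symm.trans
      (Equiv.sumArrowEquivProdArrow _ _ Bool).symm
  have hcoord : ∀ w c, Sum.elim (fun c : Fin d × Fin q => w.1 c.1 c.2) w.2 c = e w c := by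
    intro w c; cases c <;> rfl
  rw [Finset.card_equiv e (t := univ.filter fun f => ∀ c ∈ T, f c = true)
    (fun w => by simp [hcoord])]
  rw [card_filter_forall_mem_eq]
  congr 1
  simp

lemma card_filter_fst {A B : Type*} [Fintype A] [Fintype B] [DecidableEq A] [DecidableEq B]
    (P : A → Prop) [DecidablePred P] :
    (Finset.univ.filter (fun w : A × B => P w.1)).card
      = (Finset.univ.filter P).card * Fintype.card B := by
  classical
  have : (Finset.univ.filter (fun w : A × B => P w.1))
      = (Finset.univ.filter P) ×ˢ Finset.univ := by
    ext ⟨a, b⟩; simp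
  rw [this, Finset.card_product, Finset.card_univ]

lemma card_all_true (q : ℕ) :
    (Finset.univ.filter (fun u : Fin q → Bool => ∀ j, u j = true)).card = 1 := by
  classical
  have h : (Finset.univ.filter (fun u : Fin q → Bool => ∀ j, u j = true))
      = Finset.univ.filter (fun u : Fin q → Bool => ∀ c ∈ (Finset.univ : Finset (Fin q)), u c = true) := by
    ext u; simp
  rw [h]
  convert card_filter_forall_mem_eq (Finset.univ : Finset (Fin q)) using 2 <;> simp

lemma card_block (d q : ℕ) (x : Fin d → Bool) :
    (Finset.univ.filter (fun U : Fin d → Fin q → Bool =>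
        ∀ i, decide (∀ j, U i j = true) = x i)).card
      = (2 ^ q - 1) ^ (Finset.univ.filter (fun i => x i = false)).card := by
  classical
  rw [← Fintype.card_subtype]
  rw [Fintype.card_congr (Equiv.subtypePiEquivPi
    (p := fun i (u : Fin q → Bool) => decide (∀ j, u j = true) = x i))]
  rw [Fintype.card_pi]
  have h1 : ∀ i : Fin d, Fintype.card {u : Fin q → Bool // decide (∀ j, u j = true) = x i}
      = if x i = false then 2 ^ q - 1 else 1 := by
    intro i
    rw [Fintype.card_subtype]
    cases hx : x i
    · rw [if_pos rfl]
      have h2 : (Finset.univ.filter (fun u : Fin q → Bool => decide (∀ j, u j = true) = false))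
          = Finset.univ \ Finset.univ.filter (fun u : Fin q → Bool => ∀ j, u j = true) := by
        ext u; simp
      rw [h2, Finset.card_sdiff_of_subset (Finset.filter_subset _ _), card_all_true, Finset.card_univ]
      simp [Fintype.card_fun]
    · rw [if_neg (by simp)]
      have h2 : (Finset.univ.filter (fun u : Fin q → Bool => decide (∀ j, u j = true) = true))
          = Finset.univ.filter (fun u : Fin q → Bool => ∀ j, u j = true) := by
        ext u; simp
      rw [h2, card_all_true]
  calc (∏ i : Fin d, Fintype.card {u : Fin q → Bool // decide (∀ j, u j = true) = x i})
      = ∏ i : Fin d, (if x i = false then 2 ^ q - 1 else 1) :=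
        Finset.prod_congr rfl (fun i _ => h1 i)
    _ = (2 ^ q - 1) ^ (Finset.univ.filter (fun i => x i = false)).card := by
        rw [Finset.prod_ite, Finset.prod_const, Finset.prod_const, one_pow, mul_one]

/-- Let `δ ∈ (0,1)` and let `q, p, m'` be positive integers with
`d·2^{−q} ≤ 1 − δ`, `2^{−p} < δ`, `m' ≥ dq`.  With `N = m' + p`,
`Φ'(U, v) = Φ(⋀ⱼ u⁽ʲ⁾) ∨ (⋀ᵢ vᵢ)`, and `x'` the all-ones input:
`Φ` is satisfiable iff there is a subset `T` of the `dq + N` coordinates with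
`|T| ≤ dq` that is `δ`-relevant for `Φ'` and `x'`; moreover if `Φ` is unsatisfiable
then no subset `T` with `|T| ≤ m'` is `δ`-relevant for `Φ'` and `x'`.
(`δ`-relevance of `T`: `P(Φ'(y) = Φ'(x') | y_T = x'_T) ≥ δ` for uniform `y`; here
`Φ'(x') = 1`.) -/
theorem sat_iff_relevant_set (δ : ℝ) (hδ0 : 0 < δ) (hδ1 : δ < 1)
    (d q p m' : ℕ) (hd : 0 < d) (hq : 0 < q) (hp : 0 < p) (hm' : 0 < m')
    (hgap : (d : ℝ) * ((2 : ℝ) ^ q)⁻¹ ≤ 1 - δ)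
    (hpδ : ((2 : ℝ) ^ p)⁻¹ < δ)
    (hm'dq : d * q ≤ m')
    (N : ℕ) (hN : N = m' + p)
    (Φ : (Fin d → Bool) → Bool) :
    let Φ' : (Fin d → Fin q → Bool) × (Fin N → Bool) → Bool := fun w =>
      Φ (fun i => decide (∀ j : Fin q, w.1 i j = true)) || decide (∀ i : Fin N, w.2 i = true)
    let coord : (Fin d → Fin q → Bool) × (Fin N → Bool) → (Fin d × Fin q) ⊕ Fin N → Bool :=
      fun w => Sum.elim (fun c => w.1 c.1 c.2) w.2
    -- `T` is `δ`-relevant for `Φ'` and the all-ones input `x'` (note `Φ'(x') = 1`)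
    let relevant : Finset ((Fin d × Fin q) ⊕ Fin N) → Prop := fun T =>
      δ ≤ ((Finset.univ.filter
              (fun w : (Fin d → Fin q → Bool) × (Fin N → Bool) =>
                Φ' w = true ∧ ∀ c ∈ T, coord w c = true)).card : ℝ) /
          ((Finset.univ.filter
              (fun w : (Fin d → Fin q → Bool) × (Fin N → Bool) =>
                ∀ c ∈ T, coord w c = true)).card : ℝ)
    ((∃ x : Fin d → Bool, Φ x = true) ↔
      ∃ T : Finset ((Fin d × Fin q) ⊕ Fin N), T.card ≤ d * q ∧ relevant T)
    ∧ ((∀ z : Fin d → Bool, Φ z = false) →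
        ∀ T : Finset ((Fin d × Fin q) ⊕ Fin N), T.card ≤ m' → ¬ relevant T) := by
  classical
  intro Φ' coord relevant
  have h2q : (0:ℝ) < (2:ℝ) ^ q := by positivity
  have h1le2q : (1:ℝ) ≤ (2:ℝ) ^ q := by
    calc (1:ℝ) = 1 ^ q := (one_pow q).symm
      _ ≤ 2 ^ q := pow_le_pow_left₀ (by norm_num) (by norm_num) q
  -- Part 2: unsatisfiable case
  have part2 : (∀ z : Fin d → Bool, Φ z = false) →
      ∀ T : Finset ((Fin d × Fin q) ⊕ Fin N), T.card ≤ m' → ¬ relevant T := by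
    intro hz T hT hrel
    simp only [relevant, Φ', coord] at hrel
    set T' : Finset ((Fin d × Fin q) ⊕ Fin N) := T ∪ Finset.univ.image Sum.inr with hT'def
    have hPQ : (Finset.univ.filter
        (fun w : (Fin d → Fin q → Bool) × (Fin N → Bool) =>
          (Φ (fun i => decide (∀ j : Fin q, w.1 i j = true))
            || decide (∀ i : Fin N, w.2 i = true)) = true
          ∧ ∀ c ∈ T, Sum.elim (fun c : Fin d × Fin q => w.1 c.1 c.2) w.2 c = true))
        = Finset.univ.filter
        (fun w : (Fin d → Fin q → Bool) × (Fin N → Bool) =>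
          ∀ c ∈ T', Sum.elim (fun c : Fin d × Fin q => w.1 c.1 c.2) w.2 c = true) := by
      ext w
      simp only [Finset.mem_filter, Finset.mem_univ, true_and, hT'def, Finset.mem_union,
        Finset.mem_image, hz, Bool.false_or, decide_eq_true_eq]
      constructor
      · rintro ⟨hφ, hc⟩ c hc'
        rcases hc' with h | ⟨i, rfl⟩
        · exact hc c h
        · exact hφ i
      · intro hc
        exact ⟨fun i => hc (Sum.inr i) (Or.inr ⟨i, rfl⟩),
               fun c h => hc c (Or.inl h)⟩
    rw [hPQ, card_coord_forced d q N T', card_coord_forced d q N T] at hrel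
    -- cardinality bookkeeping
    have hinter : (T ∩ Finset.univ.image (Sum.inr : Fin N → (Fin d × Fin q) ⊕ Fin N)).card ≤ m' :=
      le_trans (Finset.card_le_card Finset.inter_subset_left) hT
    have hcardI : (Finset.univ.image (Sum.inr : Fin N → (Fin d × Fin q) ⊕ Fin N)).card = N := by
      rw [Finset.card_image_of_injective _ Sum.inr_injective, Finset.card_univ, Fintype.card_fin]
    have hunion : T'.card + (T ∩ Finset.univ.image (Sum.inr : Fin N → (Fin d × Fin q) ⊕ Fin N)).card
        = T.card + N := by
      rw [hT'def, Finset.card_union_add_card_inter, hcardI]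
    have hT'le : T'.card ≤ d * q + N := by
      calc T'.card ≤ Fintype.card ((Fin d × Fin q) ⊕ Fin N) := Finset.card_le_univ _
        _ = d * q + N := by simp
    have hexp : (d * q + N - T'.card) + p ≤ d * q + N - T.card := by omega
    have hnumle : ((2:ℝ) ^ (d * q + N - T'.card)) / ((2:ℝ) ^ (d * q + N - T.card))
        ≤ ((2:ℝ) ^ p)⁻¹ := by
      rw [inv_eq_one_div, div_le_div_iff₀ (by positivity) (by positivity), one_mul, ← pow_add]
      exact pow_le_pow_right₀ (by norm_num) hexp
    have hcast : ((2 ^ (d * q + N - T'.card) : ℕ) : ℝ) / ((2 ^ (d * q + N - T.card) : ℕ) : ℝ)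
        = ((2:ℝ) ^ (d * q + N - T'.card)) / ((2:ℝ) ^ (d * q + N - T.card)) := by
      push_cast; ring
    rw [hcast] at hrel
    linarith
  -- Part 1 forward
  have forward : (∃ x : Fin d → Bool, Φ x = true) →
      ∃ T : Finset ((Fin d × Fin q) ⊕ Fin N), T.card ≤ d * q ∧ relevant T := by
    rintro ⟨x, hx⟩
    set T : Finset ((Fin d × Fin q) ⊕ Fin N) :=
      (Finset.univ.filter (fun ij : Fin d × Fin q => x ij.1 = true)).image Sum.inl with hTdef
    refine ⟨T, ?_, ?_⟩
    · calc T.card ≤ (Finset.univ.filter (fun ij : Fin d × Fin q => x ij.1 = true)).card :=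
            Finset.card_image_le
        _ ≤ (Finset.univ : Finset (Fin d × Fin q)).card := Finset.card_filter_le _ _
        _ = d * q := by simp
    · simp only [relevant, Φ', coord]
      set k := (Finset.univ.filter (fun i : Fin d => x i = true)).card with hk
      set kf := (Finset.univ.filter (fun i : Fin d => x i = false)).card with hkf
      have hkkf : k + kf = d := by
        rw [hk, hkf]
        have h5 : (Finset.univ.filter (fun i : Fin d => x i = false))
            = Finset.univ.filter (fun i : Fin d => ¬ (x i = true)) := by
          ext i; simp
        rw [h5, Finset.card_filter_add_card_filter_not, Finset.card_univ, Fintype.card_fin]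
      have hTcard : T.card = k * q := by
        rw [hTdef, Finset.card_image_of_injective _ Sum.inl_injective,
          card_filter_fst (fun i : Fin d => x i = true)]
        simp [hk]
      have hden := card_coord_forced d q N T
      have hexp2 : d * q + N - T.card = kf * q + N := by
        have h4 : d * q = k * q + kf * q := by rw [← hkkf, add_mul]
        omega
      -- lower bound for numerator
      have hmono : (Finset.univ.filter
          (fun w : (Fin d → Fin q → Bool) × (Fin N → Bool) =>
            ∀ i, decide (∀ j, w.1 i j = true) = x i))
          ⊆ Finset.univ.filter
          (fun w : (Fin d → Fin q → Bool) × (Fin N → Bool) =>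
            (Φ (fun i => decide (∀ j : Fin q, w.1 i j = true))
              || decide (∀ i : Fin N, w.2 i = true)) = true
            ∧ ∀ c ∈ T, Sum.elim (fun c : Fin d × Fin q => w.1 c.1 c.2) w.2 c = true) := by
        intro w hw
        simp only [Finset.mem_filter, Finset.mem_univ, true_and] at hw ⊢
        have hfun : (fun i => decide (∀ j : Fin q, w.1 i j = true)) = x := funext hw
        refine ⟨by rw [hfun, hx, Bool.true_or], ?_⟩
        intro c hc
        rw [hTdef] at hc
        simp only [Finset.mem_image, Finset.mem_filter, Finset.mem_univ, true_and] at hc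
        obtain ⟨⟨i, j⟩, hij, rfl⟩ := hc
        have h3 : decide (∀ j : Fin q, w.1 i j = true) = true := (hw i).trans hij
        exact of_decide_eq_true h3 j
      have hBcard : (Finset.univ.filter
          (fun w : (Fin d → Fin q → Bool) × (Fin N → Bool) =>
            ∀ i, decide (∀ j, w.1 i j = true) = x i)).card
          = (2 ^ q - 1) ^ kf * 2 ^ N := by
        rw [card_filter_fst (fun U : Fin d → Fin q → Bool => ∀ i, decide (∀ j, U i j = true) = x i),
          card_block]
        congr 1
        simp [Fintype.card_fun]
      have hnumge := Finset.card_le_card hmono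
      rw [hBcard] at hnumge
      rw [hden, hexp2]
      -- now the real-number estimate
      have h12 : 1 ≤ 2 ^ q := Nat.one_le_two_pow
      have hcastB : (((2 ^ q - 1) ^ kf * 2 ^ N : ℕ) : ℝ) = ((2:ℝ) ^ q - 1) ^ kf * 2 ^ N := by
        push_cast [Nat.cast_sub h12]; ring
      have hdenpos : (0:ℝ) < ((2 ^ (kf * q + N) : ℕ) : ℝ) := by positivity
      have hval : (((2:ℝ) ^ q - 1) ^ kf * 2 ^ N) / ((2 ^ (kf * q + N) : ℕ) : ℝ)
          = (1 - ((2:ℝ) ^ q)⁻¹) ^ kf := by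
        push_cast
        rw [pow_add, show kf * q = q * kf from mul_comm _ _, pow_mul,
          mul_div_mul_right _ _ (by positivity : ((2:ℝ) ^ N) ≠ 0), ← div_pow]
        congr 1
        field_simp
      have hbern : 1 - (kf:ℝ) * ((2:ℝ) ^ q)⁻¹ ≤ (1 - ((2:ℝ) ^ q)⁻¹) ^ kf := by
        have hinv1 : ((2:ℝ) ^ q)⁻¹ ≤ 1 := inv_le_one_of_one_le₀ h1le2q
        have := one_add_mul_le_pow (a := -((2:ℝ) ^ q)⁻¹) (by linarith) kf
        calc 1 - (kf:ℝ) * ((2:ℝ) ^ q)⁻¹ = 1 + (kf:ℝ) * (-((2:ℝ) ^ q)⁻¹) := by ring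
          _ ≤ (1 + -((2:ℝ) ^ q)⁻¹) ^ kf := this
          _ = (1 - ((2:ℝ) ^ q)⁻¹) ^ kf := by ring_nf
      have hkfd : (kf:ℝ) ≤ (d:ℝ) := by
        have : kf ≤ d := by omega
        exact_mod_cast this
      have hδle : δ ≤ (1 - ((2:ℝ) ^ q)⁻¹) ^ kf := by
        have hinvpos : (0:ℝ) ≤ ((2:ℝ) ^ q)⁻¹ := by positivity
        have : (kf:ℝ) * ((2:ℝ) ^ q)⁻¹ ≤ (d:ℝ) * ((2:ℝ) ^ q)⁻¹ :=
          mul_le_mul_of_nonneg_right hkfd hinvpos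
        linarith
      calc δ ≤ (1 - ((2:ℝ) ^ q)⁻¹) ^ kf := hδle
        _ = (((2:ℝ) ^ q - 1) ^ kf * 2 ^ N) / ((2 ^ (kf * q + N) : ℕ) : ℝ) := hval.symm
        _ = (((2 ^ q - 1) ^ kf * 2 ^ N : ℕ) : ℝ) / ((2 ^ (kf * q + N) : ℕ) : ℝ) := by
            rw [hcastB]
        _ ≤ _ := by
            gcongr
            all_goals exact_mod_cast hnumge
  refine ⟨⟨forward, ?_⟩, part2⟩
  rintro ⟨T, hTc, hrel⟩
  by_contra hno
  push_neg at hno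
  have hz : ∀ z : Fin d → Bool, Φ z = false := fun z => Bool.eq_false_iff.2 (hno z)
  exact part2 hz T (le_trans hTc hm'dq) hrel
end

section
/- Let α ∈ (0,1) and let k, p, m be real numbers with k ≥ 1, p ≥ 1, m ≥ 2k·(k^{1−α} + p^{1−α}), and m > (2k)^{1/α}. Then k·(k + m + p)^{1−α} < m. -/
lemma real_rpow_add_le_add_rpow {a b : ℝ} (ha : 0 ≤ a) (hb : 0 ≤ b) {q : ℝ}
    (hq0 : 0 ≤ q) (hq1 : q ≤ 1) : (a + b) ^ q ≤ a ^ q + b ^ q := by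
  have := NNReal.rpow_add_le_add_rpow a.toNNReal b.toNNReal hq0 hq1
  have h := congrArg (fun x : NNReal => (x : ℝ)) (rfl : a.toNNReal + b.toNNReal = a.toNNReal + b.toNNReal)
  have hcoe : ((a.toNNReal + b.toNNReal : NNReal) : ℝ) = a + b := by
    simp [Real.coe_toNNReal, ha, hb]
  calc (a + b) ^ q = (((a.toNNReal + b.toNNReal : NNReal) : ℝ)) ^ q := by rw [hcoe]
    _ = (((a.toNNReal + b.toNNReal : NNReal) ^ q : NNReal) : ℝ) := by
        rw [NNReal.coe_rpow]
    _ ≤ ((a.toNNReal ^ q + b.toNNReal ^ q : NNReal) : ℝ) := by exact_mod_cast this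
    _ = a ^ q + b ^ q := by
        push_cast [NNReal.coe_rpow, Real.coe_toNNReal, ha, hb]
        rfl

/-- For `α ∈ (0,1)` and reals `k, p ≥ 1`, `m ≥ 2k·(k^{1−α} + p^{1−α})`,
`m > (2k)^{1/α}`, one has `k·(k + m + p)^{1−α} < m`. -/
theorem key_inequality (α : ℝ) (hα0 : 0 < α) (hα1 : α < 1)
    (k p m : ℝ) (hk : 1 ≤ k) (hp : 1 ≤ p)
    (hm1 : 2 * k * (k ^ (1 - α) + p ^ (1 - α)) ≤ m)
    (hm2 : (2 * k) ^ (1 / α) < m) :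
    k * (k + m + p) ^ (1 - α) < m := by
  have hk0 : (0:ℝ) < k := lt_of_lt_of_le one_pos hk
  have hp0 : (0:ℝ) < p := lt_of_lt_of_le one_pos hp
  have h2k1 : (1:ℝ) ≤ 2 * k := by linarith
  have hm0 : (0:ℝ) < m := by
    have : (1:ℝ) ≤ (2*k) ^ (1/α) := Real.one_le_rpow h2k1 (by positivity)
    linarith
  have hq0 : (0:ℝ) ≤ 1 - α := by linarith
  have hq1 : 1 - α ≤ 1 := by linarith
  -- subadditivity
  have hsub1 : (k + m + p) ^ (1 - α) ≤ (k + p) ^ (1 - α) + m ^ (1 - α) := by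
    have h := real_rpow_add_le_add_rpow (a := k + p) (b := m) (by positivity) hm0.le hq0 hq1
    calc (k + m + p) ^ (1 - α) = ((k + p) + m) ^ (1 - α) := by ring_nf
      _ ≤ _ := h
  have hsub2 : (k + p) ^ (1 - α) ≤ k ^ (1 - α) + p ^ (1 - α) :=
    real_rpow_add_le_add_rpow hk0.le hp0.le hq0 hq1
  -- part 1: k * (k+p)^(1-α) ≤ m/2
  have hpart1 : k * (k + p) ^ (1 - α) ≤ m / 2 := by
    have : k * (k + p) ^ (1 - α) ≤ k * (k ^ (1 - α) + p ^ (1 - α)) :=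
      mul_le_mul_of_nonneg_left hsub2 hk0.le
    nlinarith
  -- part 2: k * m^(1-α) < m/2, i.e. 2k < m^α
  have hmα : 2 * k < m ^ α := by
    have h1 : ((2*k) ^ (1/α)) ^ α < m ^ α :=
      Real.rpow_lt_rpow (by positivity) hm2 hα0
    rwa [← Real.rpow_mul (by positivity), one_div,
      inv_mul_cancel₀ (ne_of_gt hα0), Real.rpow_one] at h1
  have hpart2 : k * m ^ (1 - α) < m / 2 := by
    have hmul : m ^ (1 - α) * m ^ α = m := by
      rw [← Real.rpow_add hm0]; simp
    have hpos : 0 < m ^ α := Real.rpow_pos_of_pos hm0 α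
    have : 2 * k * m ^ (1 - α) < m ^ α * m ^ (1 - α) := by
      apply mul_lt_mul_of_pos_right hmα (Real.rpow_pos_of_pos hm0 _)
    nlinarith [Real.rpow_pos_of_pos hm0 (1 - α)]
  calc k * (k + m + p) ^ (1 - α) ≤ k * ((k + p) ^ (1 - α) + m ^ (1 - α)) :=
        mul_le_mul_of_nonneg_left hsub1 hk0.le
    _ = k * (k + p) ^ (1 - α) + k * m ^ (1 - α) := by ring
    _ < m / 2 + m / 2 := by linarith
    _ = m := by ring
end

section
/- Let μ ∈ ℝ and σ > 0, and let z be a real random variable with the Gaussian distribution of mean μ and variance σ². Then Var[max(z, 0)] = μ·σ·f(η) + (σ² + μ²)·F(η) − (σ·f(η) + μ·F(η))², where η = μ/σ, f(t) = (2π)^{−1/2}·exp(−t²/2) is the standard normal probability density function and F(t) = ∫_{−∞}^{t} f(s) ds is the standard normal cumulative distribution function. -/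
open MeasureTheory Real
open Set Filter ProbabilityTheory


noncomputable def stdPhi : ℝ → ℝ := fun t => (Real.sqrt (2 * π))⁻¹ * Real.exp (-t ^ 2 / 2)

lemma stdPhi_even (t : ℝ) : stdPhi (-t) = stdPhi t := by simp [stdPhi, neg_sq]

lemma stdPhi_pos (t : ℝ) : 0 < stdPhi t := by
  unfold stdPhi
  have : 0 < π := Real.pi_pos
  positivity

lemma exp_eq (x : ℝ) : Real.exp (-x ^ 2 / 2) = Real.exp (-(2⁻¹ : ℝ) * x ^ 2) := by ring_nf

lemma int_exp : Integrable (fun x : ℝ => Real.exp (-x ^ 2 / 2)) := by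
  simp_rw [exp_eq]
  exact integrable_exp_neg_mul_sq (by norm_num)

lemma int_phi : Integrable stdPhi := by
  unfold stdPhi
  exact int_exp.const_mul _

lemma int_mul_exp : Integrable (fun x : ℝ => x * Real.exp (-x ^ 2 / 2)) := by
  simp_rw [exp_eq]
  have := integrable_rpow_mul_exp_neg_mul_sq (b := 2⁻¹) (by norm_num) (s := 1) (by norm_num)
  simpa using this

lemma int_sq_exp : Integrable (fun x : ℝ => x ^ 2 * Real.exp (-x ^ 2 / 2)) := by
  simp_rw [exp_eq]
  have := integrable_rpow_mul_exp_neg_mul_sq (b := 2⁻¹) (by norm_num) (s := 2) (by norm_num)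
  have h2 : ∀ x : ℝ, x ^ (2 : ℝ) = x ^ 2 := fun x => by
    rw [show (2:ℝ) = ((2:ℕ):ℝ) by norm_num, Real.rpow_natCast]
  simpa [h2] using this

lemma int_mul_phi : Integrable (fun t : ℝ => t * stdPhi t) := by
  refine (int_mul_exp.const_mul (Real.sqrt (2 * π))⁻¹).congr ?_
  filter_upwards with x; simp only [stdPhi]; ring

lemma int_sq_phi : Integrable (fun t : ℝ => t ^ 2 * stdPhi t) := by
  refine (int_sq_exp.const_mul (Real.sqrt (2 * π))⁻¹).congr ?_
  filter_upwards with x; simp only [stdPhi]; ring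

lemma deriv_phi (t : ℝ) : HasDerivAt stdPhi (-(t * stdPhi t)) t := by
  have h1 : HasDerivAt (fun t : ℝ => -t ^ 2 / 2) (-t) t := by
    have : HasDerivAt (fun t : ℝ => -t ^ 2 / 2) (-(↑2 * t ^ 1) / 2) t :=
      ((hasDerivAt_pow 2 t).neg).div_const 2
    convert this using 1
    push_cast
    ring
  have := (h1.exp).const_mul (Real.sqrt (2 * π))⁻¹
  refine this.congr_deriv ?_
  simp only [stdPhi]; ring

lemma tendsto_sub_sq : Tendsto (fun t : ℝ => t - t ^ 2 / 2) atTop atBot := by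
  apply tendsto_atBot_mono' atTop (f₁ := fun t : ℝ => -t) ?_ tendsto_neg_atTop_atBot
  filter_upwards [eventually_ge_atTop (4:ℝ)] with t ht
  nlinarith

lemma tendsto_phi : Tendsto stdPhi atTop (nhds 0) := by
  have h : Tendsto (fun t : ℝ => -t ^ 2 / 2) atTop atBot := by
    apply tendsto_atBot_mono' atTop (f₁ := fun t : ℝ => t - t ^ 2 / 2) ?_ tendsto_sub_sq
    filter_upwards [eventually_ge_atTop (0:ℝ)] with t ht
    linarith
  have := (Real.tendsto_exp_atBot.comp h).const_mul (Real.sqrt (2 * π))⁻¹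
  simp only [Function.comp_def, mul_zero] at this; exact this

lemma tendsto_mul_phi : Tendsto (fun t : ℝ => t * stdPhi t) atTop (nhds 0) := by
  have hb : Tendsto (fun t : ℝ => (Real.sqrt (2 * π))⁻¹ * Real.exp (t - t ^ 2 / 2)) atTop (nhds 0) := by
    have := (Real.tendsto_exp_atBot.comp tendsto_sub_sq).const_mul (Real.sqrt (2 * π))⁻¹
    simpa only [Function.comp_def, mul_zero] using this
  apply squeeze_zero' ?_ ?_ hb
  · filter_upwards [eventually_ge_atTop (0:ℝ)] with t ht
    have := stdPhi_pos t
    positivity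
  · filter_upwards with t
    have h1 : t ≤ Real.exp t := by linarith [Real.add_one_le_exp t]
    calc t * stdPhi t = (Real.sqrt (2 * π))⁻¹ * (t * Real.exp (-t ^ 2 / 2)) := by
          simp only [stdPhi]; ring
      _ ≤ (Real.sqrt (2 * π))⁻¹ * (Real.exp t * Real.exp (-t ^ 2 / 2)) := by
          apply mul_le_mul_of_nonneg_left _ (by positivity)
          exact mul_le_mul_of_nonneg_right h1 (Real.exp_nonneg _)
      _ = (Real.sqrt (2 * π))⁻¹ * Real.exp (t - t ^ 2 / 2) := by
          rw [← Real.exp_add]; ring_nf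

lemma stdI1 (a : ℝ) : ∫ t in Set.Ioi a, t * stdPhi t = stdPhi a := by
  have := integral_Ioi_of_hasDerivAt_of_tendsto' (f := fun t => -stdPhi t)
    (f' := fun t => t * stdPhi t) (a := a) (m := 0)
    (fun x _ => by have := (deriv_phi x).neg; simp only [neg_neg] at this; exact this) int_mul_phi.integrableOn
    (by simpa using tendsto_phi.neg)
  simpa using this

lemma stdI2 (a : ℝ) :
    ∫ t in Set.Ioi a, t ^ 2 * stdPhi t = a * stdPhi a + ∫ t in Set.Ioi a, stdPhi t := by
  have hd : ∀ x : ℝ, HasDerivAt (fun t => -(t * stdPhi t)) (x ^ 2 * stdPhi x - stdPhi x) x := by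
    intro x
    have := ((hasDerivAt_id x).mul (deriv_phi x)).neg
    refine this.congr_deriv ?_
    simp only [id]; ring
  have := integral_Ioi_of_hasDerivAt_of_tendsto' (f := fun t => -(t * stdPhi t))
    (f' := fun t => t ^ 2 * stdPhi t - stdPhi t) (a := a) (m := 0)
    (fun x _ => hd x) (int_sq_phi.integrableOn.sub int_phi.integrableOn)
    (by simpa using tendsto_mul_phi.neg)
  rw [integral_sub int_sq_phi.integrableOn int_phi.integrableOn] at this
  simp only [zero_sub, neg_neg] at this
  linarith [this]

lemma stdI0 (a : ℝ) : ∫ t in Set.Ioi a, stdPhi t = ∫ s in Set.Iic (-a), stdPhi s := by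
  rw [← integral_comp_neg_Ioi]
  exact setIntegral_congr_fun measurableSet_Ioi fun x _ => (stdPhi_even x).symm

lemma gaussianPDFReal_std (t : ℝ) : gaussianPDFReal 0 1 t = stdPhi t := by
  simp [gaussianPDFReal, stdPhi]

section main
variable (μ σ : ℝ) (hσ : 0 < σ)

lemma hv_ne (hσ : 0 < σ) : (⟨σ ^ 2, sq_nonneg σ⟩ : NNReal) ≠ 0 := by
  intro h
  have := congrArg NNReal.toReal h
  change σ ^ 2 = (0:ℝ) at this
  nlinarith

lemma gauss_map : gaussianReal μ ⟨σ ^ 2, sq_nonneg σ⟩ =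
    (gaussianReal 0 1).map (fun t => σ * t + μ) := by
  have h1 : (gaussianReal 0 1).map (fun t => σ * t) =
      gaussianReal 0 ⟨σ ^ 2, sq_nonneg σ⟩ := by
    have := gaussianReal_map_const_mul (μ := 0) (v := 1) σ
    simp [mul_comm] at this; exact this
  have h2 : (gaussianReal 0 ⟨σ ^ 2, sq_nonneg σ⟩).map (fun t => t + μ) =
      gaussianReal μ ⟨σ ^ 2, sq_nonneg σ⟩ := by
    have := gaussianReal_map_add_const (μ := 0) (v := ⟨σ ^ 2, sq_nonneg σ⟩) μ
    simpa using this
  rw [← h2, ← h1, Measure.map_map (by fun_prop) (by fun_prop)]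
  rfl

lemma gauss_int (g : ℝ → ℝ) (hg : Measurable g) :
    ∫ x, g x ∂(gaussianReal μ ⟨σ ^ 2, sq_nonneg σ⟩) =
      ∫ t, stdPhi t * g (σ * t + μ) := by
  rw [gauss_map μ σ, integral_map (by fun_prop) (hg.aestronglyMeasurable),
    gaussianReal_of_var_ne_zero 0 one_ne_zero]
  have hpdf : gaussianPDF 0 1 = fun t => ((Real.toNNReal (gaussianPDFReal 0 1 t) : NNReal) : ENNReal) := rfl
  rw [hpdf, integral_withDensity_eq_integral_smul ((measurable_gaussianPDFReal 0 1).real_toNNReal)]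
  congr 1
  funext t
  rw [NNReal.smul_def, smul_eq_mul, Real.coe_toNNReal _ (gaussianPDFReal_nonneg 0 1 t),
    gaussianPDFReal_std]

lemma gauss_integrable (g : ℝ → ℝ) (hg : Measurable g)
    (h : Integrable (fun t => stdPhi t * g (σ * t + μ))) :
    Integrable g (gaussianReal μ ⟨σ ^ 2, sq_nonneg σ⟩) := by
  rw [gauss_map μ σ, integrable_map_measure hg.aestronglyMeasurable (by fun_prop),
    gaussianReal_of_var_ne_zero 0 one_ne_zero]
  have hpdf : gaussianPDF 0 1 = fun t => ((Real.toNNReal (gaussianPDFReal 0 1 t) : NNReal) : ENNReal) := rfl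
  rw [hpdf, integrable_withDensity_iff_integrable_smul₀ ((measurable_gaussianPDFReal 0 1).real_toNNReal.aemeasurable)]
  refine h.congr ?_
  filter_upwards with t
  rw [NNReal.smul_def, smul_eq_mul, Real.coe_toNNReal _ (gaussianPDFReal_nonneg 0 1 t),
    gaussianPDFReal_std]
  rfl

end main

section moments
variable (μ σ : ℝ)

lemma max_restrict (hσ : 0 < σ) (g : ℝ → ℝ) (hg : Measurable g) (hg0 : g 0 = 0)
    (hgint : Integrable (fun t => stdPhi t * g (σ * t + μ))) :
    ∫ t, stdPhi t * g (max (σ * t + μ) 0) = ∫ t in Set.Ioi (-(μ/σ)), stdPhi t * g (σ * t + μ) := by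
  rw [← setIntegral_eq_integral_of_forall_compl_eq_zero (s := Set.Ioi (-(μ/σ)))]
  · refine setIntegral_congr_fun measurableSet_Ioi fun t ht => ?_
    have : 0 ≤ σ * t + μ := by
      rw [Set.mem_Ioi] at ht
      have : σ * (-(μ/σ)) ≤ σ * t := by nlinarith
      rw [mul_neg, mul_div_cancel₀ _ hσ.ne'] at this
      linarith
    rw [max_eq_left this]
  · intro t ht
    simp only [Set.mem_Ioi, not_lt] at ht
    have : σ * t + μ ≤ 0 := by
      have : σ * t ≤ σ * (-(μ/σ)) := by nlinarith
      rw [mul_neg, mul_div_cancel₀ _ hσ.ne'] at this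
      linarith
    rw [max_eq_right this, hg0, mul_zero]

lemma moment1 (hσ : 0 < σ) :
    ∫ t, stdPhi t * max (σ * t + μ) 0 =
      σ * stdPhi (μ/σ) + μ * ∫ s in Set.Iic (μ/σ), stdPhi s := by
  rw [show (fun t => stdPhi t * max (σ * t + μ) 0) = fun t => stdPhi t * id (max (σ * t + μ) 0)
    from rfl]
  rw [max_restrict μ σ hσ id measurable_id rfl (by
    refine ((int_mul_phi.const_mul σ).add (int_phi.const_mul μ)).congr ?_
    filter_upwards with t; simp only [Pi.add_apply, id]; ring)]
  have hsplit : ∀ t : ℝ, stdPhi t * id (σ * t + μ) = σ * (t * stdPhi t) + μ * stdPhi t := by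
    intro t; simp only [id]; ring
  simp_rw [hsplit]
  rw [integral_add ((int_mul_phi.const_mul σ).integrableOn) ((int_phi.const_mul μ).integrableOn),
    integral_const_mul, integral_const_mul, stdI1, stdI0, neg_neg]
  rw [show stdPhi (-(μ/σ)) = stdPhi (μ/σ) from stdPhi_even _]

lemma moment2 (hσ : 0 < σ) :
    ∫ t, stdPhi t * (max (σ * t + μ) 0) ^ 2 =
      μ * σ * stdPhi (μ/σ) + (σ^2 + μ^2) * ∫ s in Set.Iic (μ/σ), stdPhi s := by
  rw [show (fun t => stdPhi t * (max (σ * t + μ) 0) ^ 2)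
      = fun t => stdPhi t * (fun x => x ^ 2) (max (σ * t + μ) 0) from rfl]
  rw [max_restrict μ σ hσ (fun x => x ^ 2) (by fun_prop) (by norm_num) (by
    refine (((int_sq_phi.const_mul (σ^2)).add (int_mul_phi.const_mul (2*σ*μ))).add
      (int_phi.const_mul (μ^2))).congr ?_
    filter_upwards with t; simp only [Pi.add_apply]; ring)]
  have hsplit : ∀ t : ℝ, stdPhi t * (fun x => x ^ 2) (σ * t + μ)
      = σ^2 * (t^2 * stdPhi t) + (2*σ*μ) * (t * stdPhi t) + μ^2 * stdPhi t := by
    intro t; ring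
  simp_rw [hsplit]
  have hA : Integrable (fun t : ℝ => σ^2 * (t^2 * stdPhi t) + 2*σ*μ * (t * stdPhi t)) := by
    refine ((int_sq_phi.const_mul (σ^2)).add (int_mul_phi.const_mul (2*σ*μ))).congr ?_
    filter_upwards with t; simp [Pi.add_apply]
  rw [integral_add (hA.integrableOn) ((int_phi.const_mul _).integrableOn),
    integral_add ((int_sq_phi.const_mul _).integrableOn) ((int_mul_phi.const_mul _).integrableOn),
    integral_const_mul, integral_const_mul, integral_const_mul, stdI1, stdI2, stdI0, neg_neg]
  rw [show stdPhi (-(μ/σ)) = stdPhi (μ/σ) from stdPhi_even _]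
  field_simp
  ring

lemma relu_memlp (hσ : 0 < σ) :
    MemLp (fun z : ℝ => max z 0) 2 (gaussianReal μ ⟨σ ^ 2, sq_nonneg σ⟩) := by
  rw [memLp_two_iff_integrable_sq ((by fun_prop : Measurable fun z : ℝ => max z 0).aestronglyMeasurable)]
  apply gauss_integrable μ σ _ (by fun_prop)
  refine Integrable.mono (g := fun t => σ^2 * (t^2 * stdPhi t) + (2*σ*μ) * (t * stdPhi t)
      + μ^2 * stdPhi t) ?_ ?_ ?_
  · exact ((int_sq_phi.const_mul _).add (int_mul_phi.const_mul _)).add (int_phi.const_mul _)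
  · apply Measurable.aestronglyMeasurable
    have : Measurable stdPhi := by unfold stdPhi; fun_prop
    fun_prop
  · filter_upwards with t
    have h1 : (max (σ * t + μ) 0) ^ 2 ≤ (σ * t + μ) ^ 2 := by
      rcases le_or_gt (σ * t + μ) 0 with h | h
      · rw [max_eq_right h]; simpa using sq_nonneg (σ * t + μ)
      · rw [max_eq_left h.le]
    have hp := stdPhi_pos t
    have heq : σ^2 * (t^2 * stdPhi t) + (2*σ*μ) * (t * stdPhi t) + μ^2 * stdPhi t
        = stdPhi t * (σ * t + μ)^2 := by ring
    rw [Real.norm_eq_abs, Real.norm_eq_abs, heq,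
      abs_of_nonneg (mul_nonneg hp.le (sq_nonneg _)),
      abs_of_nonneg (mul_nonneg hp.le (sq_nonneg _))]
    exact mul_le_mul_of_nonneg_left h1 hp.le

end moments


/-- For a Gaussian random variable `z` with mean `μ` and variance `σ²`
(`σ > 0`), with `η = μ/σ`,
`Var[max(z,0)] = μ·σ·f(η) + (σ² + μ²)·F(η) − (σ·f(η) + μ·F(η))²`, where `f` is the
standard normal density and `F` the standard normal cumulative distribution function. -/
theorem gaussian_relu_variance (μ σ : ℝ) (hσ : 0 < σ) :
    let f : ℝ → ℝ := fun t => (Real.sqrt (2 * π))⁻¹ * Real.exp (-t ^ 2 / 2)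
    let F : ℝ → ℝ := fun t => ∫ s in Set.Iic t, f s
    let η : ℝ := μ / σ
    ProbabilityTheory.variance (fun z => max z 0)
        (ProbabilityTheory.gaussianReal μ ⟨σ ^ 2, sq_nonneg σ⟩) =
      μ * σ * f η + (σ ^ 2 + μ ^ 2) * F η - (σ * f η + μ * F η) ^ 2 := by

  intro f F η
  have hf : f = stdPhi := rfl
  have hF : F = fun t => ∫ s in Set.Iic t, stdPhi s := rfl
  have hη : η = μ / σ := rfl
  simp only [hf, hF, hη]
  have : IsProbabilityMeasure (gaussianReal μ ⟨σ ^ 2, sq_nonneg σ⟩) := instIsProbabilityMeasureGaussianReal μ _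
  rw [ProbabilityTheory.variance_eq_sub (relu_memlp μ σ hσ)]
  have hsq : ((fun z : ℝ => max z 0) ^ 2) = fun z : ℝ => (max z 0) ^ 2 := rfl
  rw [hsq]
  rw [gauss_int μ σ (fun z => (max z 0) ^ 2) (by fun_prop),
    gauss_int μ σ (fun z => max z 0) (by fun_prop),
    moment2 μ σ hσ, moment1 μ σ hσ]
end
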